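/- Let k be a local field (e.g. ℝ), V = kⁿ, and J a subgroup of GL(V) acting on the projective space P(V) preserving a Borel probability measure μ. Then either the image of J in PGL(V) has compact closure, or there exists a proper nonzero subspace W < V with μ([W]) > 0, where [W] denotes the image of W \ {0} in P(V). -/

import Mathlib

open MeasureTheory

/-- The quotient topology on projective space `P(V)`, as a quotient of `V \ {0}`. -/
noncomputable instance projectivizationTopology {K V : Type*} [DivisionRing K] [AddCommGroup V]
    [Module K V] [TopologicalSpace V] :
    TopologicalSpace (Projectivization K V) :=
  inferInstanceAs (TopologicalSpace (Quotient (projectivizationSetoid K V)))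

section FurstenbergAux

open Metric Set Filter Topology

variable {n : ℕ}

/-- normalization is invariant under positive scaling -/
lemma furst_normalize_smul {E : Type*} [NormedAddCommGroup E] [NormedSpace ℝ E] {t : ℝ}
    (ht : 0 < t) (u : E) : ‖t • u‖⁻¹ • (t • u) = ‖u‖⁻¹ • u := by
  rcases eq_or_ne u 0 with rfl | hu
  · simp
  · have h1 : ‖u‖ ≠ 0 := norm_ne_zero_iff.2 hu
    rw [norm_smul, smul_smul]
    congr 1
    rw [Real.norm_eq_abs, abs_of_pos ht]
    field_simp

lemma furst_infDist_neg (U : Submodule ℝ (Fin n → ℝ)) (u : Fin n → ℝ) :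
    infDist (-u) (U : Set (Fin n → ℝ)) = infDist u (U : Set (Fin n → ℝ)) := by
  conv_lhs => rw [← Submodule.neg_coe U, ← Set.image_neg_eq_neg]
  exact infDist_image isometry_neg

/-- The (well-defined) distance from a projective point (normalized) to a submodule. -/
noncomputable def furstDist (U : Submodule ℝ (Fin n → ℝ)) :
    Projectivization ℝ (Fin n → ℝ) → ℝ :=
  Projectivization.lift
    (fun v => infDist (‖(v : Fin n → ℝ)‖⁻¹ • (v : Fin n → ℝ)) (U : Set (Fin n → ℝ)))
    (by
      rintro ⟨a, ha⟩ ⟨b, hb⟩ t (h : a = t • b)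
      have ht : t ≠ 0 := by rintro rfl; rw [zero_smul] at h; exact ha h
      rcases ht.lt_or_gt with htneg | htpos
      · have h2 : a = (-t) • (-b) := by rw [smul_neg, neg_smul, neg_neg, h]
        dsimp only
        rw [h2, furst_normalize_smul (neg_pos.2 htneg), norm_neg, smul_neg, furst_infDist_neg]
      · dsimp only
        rw [h, furst_normalize_smul htpos])

lemma furstDist_mk (U : Submodule ℝ (Fin n → ℝ)) (v : Fin n → ℝ) (hv : v ≠ 0) :
    furstDist U (Projectivization.mk ℝ v hv) = infDist (‖v‖⁻¹ • v) (U : Set (Fin n → ℝ)) :=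
  rfl

lemma continuous_furstDist (U : Submodule ℝ (Fin n → ℝ)) : Continuous (furstDist U) := by
  have h1 : Continuous (fun v : {w : Fin n → ℝ // w ≠ 0} => (v : Fin n → ℝ)) :=
    continuous_subtype_val
  have h2 : Continuous (fun v : {w : Fin n → ℝ // w ≠ 0} => ‖(v : Fin n → ℝ)‖⁻¹) :=
    h1.norm.inv₀ (fun v => norm_ne_zero_iff.2 v.2)
  exact ((continuous_infDist_pt (U : Set (Fin n → ℝ))).comp (h2.smul h1)).quotient_lift _

lemma furstDist_nonneg (U : Submodule ℝ (Fin n → ℝ)) (x : Projectivization ℝ (Fin n → ℝ)) :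
    0 ≤ furstDist U x := by
  induction x using Projectivization.ind with
  | h v hv => rw [furstDist_mk]; exact infDist_nonneg

lemma furstDist_eq_zero_iff (U : Submodule ℝ (Fin n → ℝ))
    (x : Projectivization ℝ (Fin n → ℝ)) :
    furstDist U x = 0 ↔ x.submodule ≤ U := by
  induction x using Projectivization.ind with
  | h v hv =>
    rw [furstDist_mk, Projectivization.submodule_mk, Submodule.span_singleton_le_iff_mem,
      ← (Submodule.closed_of_finiteDimensional U).mem_iff_infDist_zero ⟨0, U.zero_mem⟩,
      SetLike.mem_coe, Submodule.smul_mem_iff _ (inv_ne_zero (norm_ne_zero_iff.2 hv))]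

section MainProof

/-- Furstenberg's lemma: if a subgroup `J ≤ GL(V)` (here `V = ℝⁿ`) preserves a Borel
probability measure `μ` on the projective space `P(V)`, then either the image of `J` in
`PGL(V) = GL(V)/Z(GL(V))` has compact closure, or some proper nonzero subspace `W < V`
has positive measure. -/
theorem stmt_4 {n : ℕ}
    [MeasurableSpace (Projectivization ℝ (Fin n → ℝ))]
    [BorelSpace (Projectivization ℝ (Fin n → ℝ))]
    (J : Subgroup (GL (Fin n) ℝ))
    (μ : Measure (Projectivization ℝ (Fin n → ℝ))) [IsProbabilityMeasure μ]
    (hinv : ∀ g ∈ J,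
      Measure.map
        (Projectivization.map
          ((Matrix.GeneralLinearGroup.toLin g).toLinearEquiv.toLinearMap)
          (Matrix.GeneralLinearGroup.toLin g).toLinearEquiv.injective) μ = μ) :
    IsCompact (closure ((QuotientGroup.mk '' (J : Set (GL (Fin n) ℝ))) :
        Set (GL (Fin n) ℝ ⧸ Subgroup.center (GL (Fin n) ℝ)))) ∨
      ∃ W : Submodule ℝ (Fin n → ℝ), W ≠ ⊥ ∧ W ≠ ⊤ ∧
        0 < μ {x : Projectivization ℝ (Fin n → ℝ) | x.submodule ≤ W} := by
  classical
  letI : NormedAddCommGroup (Matrix (Fin n) (Fin n) ℝ) := Matrix.normedAddCommGroup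
  letI : NormedSpace ℝ (Matrix (Fin n) (Fin n) ℝ) := Matrix.normedSpace
  haveI : IsBoundedSMul ℝ (Matrix (Fin n) (Fin n) ℝ) := Matrix.isBoundedSMul
  by_cases hW : ∃ W : Submodule ℝ (Fin n → ℝ), W ≠ ⊥ ∧ W ≠ ⊤ ∧
      0 < μ {x : Projectivization ℝ (Fin n → ℝ) | x.submodule ≤ W}
  · exact Or.inr hW
  left
  have hnull : ∀ W : Submodule ℝ (Fin n → ℝ), W ≠ ⊥ → W ≠ ⊤ →
      μ {x : Projectivization ℝ (Fin n → ℝ) | x.submodule ≤ W} = 0 := by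
    intro W h1 h2
    by_contra h
    exact hW ⟨W, h1, h2, pos_iff_ne_zero.mpr h⟩
  rcases Nat.eq_zero_or_pos n with hn | hn
  · subst hn
    haveI : Subsingleton (Matrix (Fin 0) (Fin 0) ℝ) :=
      ⟨fun a b => Matrix.ext fun i => i.elim0⟩
    haveI : Subsingleton (GL (Fin 0) ℝ) := ⟨fun a b => Units.ext (Subsingleton.elim _ _)⟩
    exact (Set.toFinite _).isCompact
  haveI : Nonempty (Fin n) := ⟨⟨0, hn⟩⟩
  by_cases hbd : ∃ M : ℝ, ∀ g ∈ J,
      ‖(g : Matrix (Fin n) (Fin n) ℝ)‖ ^ n ≤ M * |(g : Matrix (Fin n) (Fin n) ℝ).det|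
  · -- bounded case : image is relatively compact
    obtain ⟨M, hM⟩ := hbd
    set M' := max M 1 with hM'def
    have hM'1 : (1 : ℝ) ≤ M' := le_max_right _ _
    have hM2 : ∀ g ∈ J, ‖(g : Matrix (Fin n) (Fin n) ℝ)‖ ^ n
        ≤ M' * |(g : Matrix (Fin n) (Fin n) ℝ).det| := fun g hg =>
      (hM g hg).trans (mul_le_mul_of_nonneg_right (le_max_left _ _) (abs_nonneg _))
    set D : Set (Matrix (Fin n) (Fin n) ℝ) := {A | ‖A‖ = 1 ∧ 1 ≤ M' * |A.det|} with hD
    have hDdet : ∀ A ∈ D, A.det ≠ 0 := by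
      intro A hA h0
      have h2 := hA.2
      rw [h0] at h2
      simp at h2
      linarith
    have hDcompact : IsCompact D := by
      haveI : ProperSpace (Matrix (Fin n) (Fin n) ℝ) :=
        inferInstanceAs (ProperSpace (Fin n → Fin n → ℝ))
      have hsub : D ⊆ sphere (0 : Matrix (Fin n) (Fin n) ℝ) 1 := fun A hA => by
        simpa [mem_sphere_iff_norm] using hA.1
      have h1 : IsClosed {A : Matrix (Fin n) (Fin n) ℝ | ‖A‖ = 1} :=
        isClosed_eq continuous_norm continuous_const
      have h2 : IsClosed {A : Matrix (Fin n) (Fin n) ℝ | 1 ≤ M' * |A.det|} :=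
        isClosed_le continuous_const (continuous_const.mul continuous_id.matrix_det.abs)
      exact (isCompact_sphere 0 1).of_isClosed_subset (h1.inter h2) hsub
    set C : Set (GL (Fin n) ℝ) := {g | (g : Matrix (Fin n) (Fin n) ℝ) ∈ D} with hC
    have hCcompact : IsCompact C := by
      rw [Units.isEmbedding_embedProduct.isCompact_iff]
      have himg : (Units.embedProduct _) '' C =
          (fun A : Matrix (Fin n) (Fin n) ℝ => (A, MulOpposite.op A⁻¹)) '' D := by
        ext p
        constructor
        · rintro ⟨g, hg, rfl⟩
          exact ⟨(g : Matrix (Fin n) (Fin n) ℝ), hg, by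
            simp [Units.embedProduct, Matrix.coe_units_inv]⟩
        · rintro ⟨A, hA, rfl⟩
          have hu : IsUnit A :=
            (Matrix.isUnit_iff_isUnit_det A).2 (isUnit_iff_ne_zero.2 (hDdet A hA))
          obtain ⟨g, rfl⟩ := hu
          exact ⟨g, hA, by simp [Units.embedProduct, Matrix.coe_units_inv]⟩
      rw [himg]
      apply hDcompact.image_of_continuousOn
      refine continuousOn_id.prodMk (MulOpposite.continuous_op.comp_continuousOn ?_)
      intro A hA
      exact (continuousAt_matrix_inv A (by
        rw [Ring.inverse_eq_inv']
        exact continuousAt_inv₀ (hDdet A hA))).continuousWithinAt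
    have hT : IsCompact ((QuotientGroup.mk '' C) :
        Set (GL (Fin n) ℝ ⧸ Subgroup.center (GL (Fin n) ℝ))) :=
      hCcompact.image continuous_quotient_mk'
    haveI : T2Space (GL (Fin n) ℝ) := Units.isEmbedding_embedProduct.t2Space
    haveI hclosedcenter : IsClosed ((Subgroup.center (GL (Fin n) ℝ)) : Set (GL (Fin n) ℝ)) := by
      have hcen : ((Subgroup.center (GL (Fin n) ℝ)) : Set (GL (Fin n) ℝ))
          = ⋂ g, {x | g * x = x * g} := by
        ext x
        simp [Subgroup.mem_center_iff, Set.mem_iInter]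
      rw [hcen]
      exact isClosed_iInter fun g => isClosed_eq (continuous_mul_left g) (continuous_mul_right g)
    have hmono : (QuotientGroup.mk '' (J : Set (GL (Fin n) ℝ)) :
        Set (GL (Fin n) ℝ ⧸ Subgroup.center (GL (Fin n) ℝ))) ⊆ QuotientGroup.mk '' C := by
      rintro _ ⟨g, hg, rfl⟩
      set c : ℝ := ‖(g : Matrix (Fin n) (Fin n) ℝ)‖ with hc
      have hgne : (g : Matrix (Fin n) (Fin n) ℝ) ≠ 0 := by
        intro h0
        have h1 := g.mul_inv
        rw [h0, zero_mul] at h1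
        have h2 := congr_fun (congr_fun h1 ⟨0, hn⟩) ⟨0, hn⟩
        simp [Matrix.one_apply] at h2
      have hcpos : 0 < c := norm_pos_iff.2 hgne
      set u : GL (Fin n) ℝ := Units.mk (c⁻¹ • (g : Matrix (Fin n) (Fin n) ℝ))
        (c • ((g⁻¹ : GL (Fin n) ℝ) : Matrix (Fin n) (Fin n) ℝ))
        (by rw [smul_mul_smul_comm, inv_mul_cancel₀ hcpos.ne', g.mul_inv, one_smul])
        (by rw [smul_mul_smul_comm, mul_inv_cancel₀ hcpos.ne', g.inv_mul, one_smul]) with hu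
      have huC : u ∈ C := by
        constructor
        · show ‖c⁻¹ • (g : Matrix (Fin n) (Fin n) ℝ)‖ = 1
          rw [norm_smul, Real.norm_eq_abs, abs_of_pos (inv_pos.2 hcpos), ← hc,
            inv_mul_cancel₀ hcpos.ne']
        · show (1 : ℝ) ≤ M' * |(c⁻¹ • (g : Matrix (Fin n) (Fin n) ℝ)).det|
          rw [Matrix.det_smul, abs_mul, abs_pow, abs_of_pos (inv_pos.2 hcpos),
            Fintype.card_fin]
          have hcn : (0 : ℝ) < c ^ n := pow_pos hcpos n
          have heq : M' * (c⁻¹ ^ n * |(g : Matrix (Fin n) (Fin n) ℝ).det|)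
              = (M' * |(g : Matrix (Fin n) (Fin n) ℝ).det|) / c ^ n := by
            rw [inv_pow]; ring
          rw [heq]
          exact (one_le_div hcn).2 (hM2 g hg)
      refine ⟨u, huC, ?_⟩
      symm
      rw [QuotientGroup.eq]
      have hval : ((g⁻¹ * u : GL (Fin n) ℝ) : Matrix (Fin n) (Fin n) ℝ)
          = c⁻¹ • (1 : Matrix (Fin n) (Fin n) ℝ) := by
        rw [Units.val_mul]
        show ((g⁻¹ : GL (Fin n) ℝ) : Matrix (Fin n) (Fin n) ℝ)
          * (c⁻¹ • (g : Matrix (Fin n) (Fin n) ℝ)) = _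
        rw [mul_smul_comm, g.inv_mul]
      refine Subgroup.mem_center_iff.2 fun h => Units.ext ?_
      rw [Units.val_mul, hval, Units.val_mul, hval, mul_smul_comm, smul_mul_assoc, one_mul,
        mul_one]
    exact hT.of_isClosed_subset isClosed_closure (closure_minimal hmono hT.isClosed)
  · -- unbounded case : derive a contradiction
    exfalso
    push_neg at hbd
    have hseq : ∀ m : ℕ, ∃ gg : GL (Fin n) ℝ, gg ∈ J ∧
        ((m : ℝ) + 1) * |(gg : Matrix (Fin n) (Fin n) ℝ).det|
          < ‖(gg : Matrix (Fin n) (Fin n) ℝ)‖ ^ n := fun m => by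
      obtain ⟨gg, hg, hlt⟩ := hbd ((m : ℝ) + 1)
      exact ⟨gg, hg, hlt⟩
    choose g hgJ hglt using hseq
    have hgne : ∀ m, ((g m : Matrix (Fin n) (Fin n) ℝ)) ≠ 0 := by
      intro m h0
      have h1 := (g m).mul_inv
      rw [h0, zero_mul] at h1
      have h2 := congr_fun (congr_fun h1 ⟨0, hn⟩) ⟨0, hn⟩
      simp [Matrix.one_apply] at h2
    set c : ℕ → ℝ := fun m => ‖(g m : Matrix (Fin n) (Fin n) ℝ)‖ with hcdef
    have hcpos : ∀ m, 0 < c m := fun m => norm_pos_iff.2 (hgne m)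
    set h : ℕ → Matrix (Fin n) (Fin n) ℝ :=
      fun m => (c m)⁻¹ • (g m : Matrix (Fin n) (Fin n) ℝ) with hhdef
    have hhnorm : ∀ m, ‖h m‖ = 1 := by
      intro m
      rw [hhdef]
      dsimp only
      rw [norm_smul, Real.norm_eq_abs, abs_of_pos (inv_pos.2 (hcpos m)),
        inv_mul_cancel₀ (hcpos m).ne']
    have hhdet : ∀ m, |(h m).det| < 1 / ((m : ℝ) + 1) := by
      intro m
      have heq : |(h m).det| = |(g m : Matrix (Fin n) (Fin n) ℝ).det| / c m ^ n := by
        rw [hhdef]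
        dsimp only
        rw [Matrix.det_smul, abs_mul, abs_pow, abs_of_pos (inv_pos.2 (hcpos m)),
          Fintype.card_fin, inv_pow, inv_mul_eq_div]
      rw [heq, div_lt_div_iff₀ (pow_pos (hcpos m) n) (by positivity), one_mul]
      calc |(g m : Matrix (Fin n) (Fin n) ℝ).det| * ((m : ℝ) + 1)
          = ((m : ℝ) + 1) * |(g m : Matrix (Fin n) (Fin n) ℝ).det| := by ring
        _ < ‖(g m : Matrix (Fin n) (Fin n) ℝ)‖ ^ n := hglt m
        _ = c m ^ n := rfl
    haveI : ProperSpace (Matrix (Fin n) (Fin n) ℝ) :=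
      inferInstanceAs (ProperSpace (Fin n → Fin n → ℝ))
    obtain ⟨A, hAsp, σ, hσmono, hconv⟩ := (isCompact_sphere
      (0 : Matrix (Fin n) (Fin n) ℝ) 1).tendsto_subseq
      (fun m => by simpa [mem_sphere_iff_norm] using hhnorm m)
    have hAnorm : ‖A‖ = 1 := by simpa [mem_sphere_iff_norm] using hAsp
    have hA0 : A ≠ 0 := by
      intro h0
      rw [h0, norm_zero] at hAnorm
      exact one_ne_zero hAnorm.symm
    have hAdet : A.det = 0 := by
      have h1 : Filter.Tendsto (fun m => |((h ∘ σ) m).det|) Filter.atTop (nhds |A.det|) :=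
        ((continuous_id.matrix_det.abs).tendsto A).comp hconv
      have h2 : Filter.Tendsto (fun m => |((h ∘ σ) m).det|) Filter.atTop (nhds 0) := by
        apply squeeze_zero (fun m => abs_nonneg _) (g := fun m : ℕ => 1 / ((m : ℝ) + 1))
        · intro m
          refine le_of_lt (lt_of_lt_of_le (hhdet (σ m)) ?_)
          apply one_div_le_one_div_of_le (by positivity)
          have : (m : ℝ) ≤ (σ m : ℝ) := by exact_mod_cast hσmono.le_apply
          linarith
        · exact tendsto_one_div_add_atTop_nhds_zero_nat
      have h3 := tendsto_nhds_unique h1 h2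
      exact abs_eq_zero.1 h3
    -- the image and kernel of A
    set W : Submodule ℝ (Fin n → ℝ) := LinearMap.range (Matrix.mulVecLin A) with hWdef
    set Wk : Submodule ℝ (Fin n → ℝ) := LinearMap.ker (Matrix.mulVecLin A) with hWkdef
    have hmvl0 : ∀ B : Matrix (Fin n) (Fin n) ℝ, B.mulVecLin = 0 → B = 0 := by
      intro B hB
      ext i j
      have h1 : B.mulVec (Pi.single j 1) = 0 := by rw [← Matrix.mulVecLin_apply, hB]; rfl
      rw [Matrix.mulVec_single_one] at h1
      have := congr_fun h1 i
      simpa using this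
    have hdetnu : ¬ IsUnit A := by
      intro hu
      have := (Matrix.isUnit_iff_isUnit_det A).1 hu
      rw [hAdet] at this
      exact (isUnit_iff_ne_zero.1 this) rfl
    have hWbot : W ≠ ⊥ := by
      intro h0
      exact hA0 (hmvl0 A (LinearMap.range_eq_bot.1 h0))
    have hWtop : W ≠ ⊤ := by
      intro h0
      exact hdetnu (Matrix.mulVec_surjective_iff_isUnit.1 (LinearMap.range_eq_top.1 h0))
    have hkbot : Wk ≠ ⊥ := by
      intro h0
      exact hdetnu (Matrix.mulVec_injective_iff_isUnit.1 (LinearMap.ker_eq_bot.1 h0))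
    have hktop : Wk ≠ ⊤ := by
      intro h0
      exact hA0 (hmvl0 A (LinearMap.ker_eq_top.1 h0))
    -- transformations
    set Tmap : GL (Fin n) ℝ → Projectivization ℝ (Fin n → ℝ) → Projectivization ℝ (Fin n → ℝ) :=
      fun gg => Projectivization.map
        ((Matrix.GeneralLinearGroup.toLin gg).toLinearEquiv.toLinearMap)
        (Matrix.GeneralLinearGroup.toLin gg).toLinearEquiv.injective with hTdef
    have hTcont : ∀ gg : GL (Fin n) ℝ, Continuous (Tmap gg) := by
      intro gg
      have hfc : Continuous ((Matrix.GeneralLinearGroup.toLin gg).toLinearEquiv.toLinearMap :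
          (Fin n → ℝ) → (Fin n → ℝ)) :=
        LinearMap.continuous_of_finiteDimensional _
      exact ((hfc.comp continuous_subtype_val).subtype_mk _).quotient_map' _
    have hTmk : ∀ (gg : GL (Fin n) ℝ) (v : Fin n → ℝ) (hv : v ≠ 0),
        ∃ hv2 : (gg : Matrix (Fin n) (Fin n) ℝ).mulVec v ≠ 0,
        Tmap gg (Projectivization.mk ℝ v hv)
          = Projectivization.mk ℝ ((gg : Matrix (Fin n) (Fin n) ℝ).mulVec v) hv2 := by
      intro gg v hv
      have hinj : Function.Injective ((gg : Matrix (Fin n) (Fin n) ℝ).mulVec) :=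
        Matrix.mulVec_injective_iff_isUnit.2 gg.isUnit
      have hv2 : (gg : Matrix (Fin n) (Fin n) ℝ).mulVec v ≠ 0 := by
        intro h0
        exact hv (hinj (h0.trans (Matrix.mulVec_zero _).symm))
      refine ⟨hv2, ?_⟩
      rw [hTdef]
      dsimp only
      rw [Projectivization.map_mk]
      rfl
    -- the sublevel sets of the distance to W
    set Uk : ℕ → Set (Projectivization ℝ (Fin n → ℝ)) :=
      fun k => furstDist W ⁻¹' (Set.Iio (1 / ((k : ℝ) + 1))) with hUkdef
    have hUkopen : ∀ k, IsOpen (Uk k) := fun k =>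
      isOpen_Iio.preimage (continuous_furstDist W)
    have hUkmeas : ∀ k, MeasurableSet (Uk k) := fun k => (hUkopen k).measurableSet
    have hSWset : {x : Projectivization ℝ (Fin n → ℝ) | x.submodule ≤ W}
        = furstDist W ⁻¹' {0} :=
      Set.ext fun x => Iff.symm (furstDist_eq_zero_iff W x)
    have hSkset : {x : Projectivization ℝ (Fin n → ℝ) | x.submodule ≤ Wk}
        = furstDist Wk ⁻¹' {0} :=
      Set.ext fun x => Iff.symm (furstDist_eq_zero_iff Wk x)
    have hSWmeas : MeasurableSet {x : Projectivization ℝ (Fin n → ℝ) | x.submodule ≤ W} := by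
      rw [hSWset]
      exact (isClosed_singleton.preimage (continuous_furstDist W)).measurableSet
    have hSkmeas : MeasurableSet {x : Projectivization ℝ (Fin n → ℝ) | x.submodule ≤ Wk} := by
      rw [hSkset]
      exact (isClosed_singleton.preimage (continuous_furstDist Wk)).measurableSet
    -- each Uk has full measure
    have hUk1 : ∀ k, μ (Uk k) = 1 := by
      intro k
      have hkpos : (0 : ℝ) < 1 / ((k : ℝ) + 1) := by positivity
      set Cs : ℕ → Set (Projectivization ℝ (Fin n → ℝ)) :=
        fun M => ⋂ m, ⋂ (_ : M ≤ m), (Tmap (g (σ m)))⁻¹' (Uk k) with hCsdef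
      have hmonoC : Monotone Cs := by
        intro a b hab x hx
        simp only [hCsdef, Set.mem_iInter] at hx ⊢
        intro m hm
        exact hx m (hab.trans hm)
      have hsub : {x : Projectivization ℝ (Fin n → ℝ) | x.submodule ≤ Wk}ᶜ ⊆ ⋃ M, Cs M := by
        intro x hx
        have hvx := Projectivization.mk_rep x
        have hxk : A.mulVec x.rep ≠ 0 := by
          intro h0
          apply hx
          show x.submodule ≤ Wk
          rw [← hvx, Projectivization.submodule_mk, Submodule.span_singleton_le_iff_mem]
          exact LinearMap.mem_ker.2 (by simpa using h0)
        -- pointwise convergence of the distances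
        have heval : ∀ m, furstDist W (Tmap (g (σ m)) x)
            = infDist (‖(h (σ m)).mulVec x.rep‖⁻¹ • ((h (σ m)).mulVec x.rep))
              (W : Set (Fin n → ℝ)) := by
          intro m
          obtain ⟨hv2, hmk⟩ := hTmk (g (σ m)) x.rep x.rep_nonzero
          conv_lhs => rw [← hvx]
          rw [hmk, furstDist_mk]
          have hmv : (h (σ m)).mulVec x.rep
              = (c (σ m))⁻¹ • ((g (σ m) : Matrix (Fin n) (Fin n) ℝ).mulVec x.rep) := by
            rw [hhdef]
            dsimp only
            rw [Matrix.smul_mulVec]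
          rw [hmv, furst_normalize_smul (inv_pos.2 (hcpos (σ m)))]
        have hmvtend : Filter.Tendsto (fun m => (h (σ m)).mulVec x.rep) Filter.atTop
            (nhds (A.mulVec x.rep)) :=
          ((continuous_id.matrix_mulVec continuous_const).tendsto A).comp hconv
        have hGcont : ContinuousAt
            (fun w : Fin n → ℝ => infDist (‖w‖⁻¹ • w) (W : Set (Fin n → ℝ)))
            (A.mulVec x.rep) := by
          have h1 : ContinuousAt (fun w : Fin n → ℝ => ‖w‖⁻¹ • w) (A.mulVec x.rep) :=
            (continuous_norm.continuousAt.inv₀ (norm_ne_zero_iff.2 hxk)).smul continuousAt_id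
          exact ((continuous_infDist_pt _).continuousAt).comp h1
        have hval0 : infDist (‖A.mulVec x.rep‖⁻¹ • A.mulVec x.rep) (W : Set (Fin n → ℝ)) = 0 :=
          infDist_zero_of_mem (W.smul_mem _ ⟨x.rep, rfl⟩)
        have htend : Filter.Tendsto (fun m => furstDist W (Tmap (g (σ m)) x)) Filter.atTop
            (nhds 0) := by
          simp only [heval]
          rw [← hval0]
          exact hGcont.tendsto.comp hmvtend
        have hev : ∀ᶠ m in Filter.atTop,
            furstDist W (Tmap (g (σ m)) x) < 1 / ((k : ℝ) + 1) :=
          htend.eventually_lt_const hkpos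
        obtain ⟨M, hM⟩ := Filter.eventually_atTop.1 hev
        refine Set.mem_iUnion.2 ⟨M, ?_⟩
        simp only [hCsdef, Set.mem_iInter]
        intro m hm
        exact hM m hm
      have hinvk : ∀ m : ℕ, μ ((Tmap (g (σ m)))⁻¹' (Uk k)) = μ (Uk k) := by
        intro m
        conv_rhs => rw [← hinv (g (σ m)) (hgJ (σ m))]
        rw [Measure.map_apply (hTcont (g (σ m))).measurable (hUkmeas k)]
      have hcompl1 : μ ({x : Projectivization ℝ (Fin n → ℝ) | x.submodule ≤ Wk}ᶜ) = 1 := by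
        rw [measure_compl hSkmeas (measure_ne_top μ _), hnull Wk hkbot hktop, measure_univ]
        simp
      have hge : (1 : ENNReal) ≤ μ (Uk k) := by
        calc (1 : ENNReal) = μ ({x : Projectivization ℝ (Fin n → ℝ) | x.submodule ≤ Wk}ᶜ) :=
              hcompl1.symm
          _ ≤ μ (⋃ M, Cs M) := measure_mono hsub
          _ = ⨆ M, μ (Cs M) := hmonoC.measure_iUnion
          _ ≤ μ (Uk k) := by
              refine iSup_le fun M => ?_
              refine le_trans (measure_mono ?_) (le_of_eq (hinvk M))
              intro x hx
              simp only [hCsdef, Set.mem_iInter] at hx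
              exact hx M le_rfl
      exact le_antisymm prob_le_one hge
    -- conclusion : the set of x with x.submodule ≤ W has measure 1, contradiction
    have hSWiInter : {x : Projectivization ℝ (Fin n → ℝ) | x.submodule ≤ W} = ⋂ k, Uk k := by
      ext x
      simp only [hSWset, Set.mem_preimage, Set.mem_singleton_iff, Set.mem_iInter, hUkdef,
        Set.mem_Iio]
      constructor
      · intro h0 k
        rw [h0]
        positivity
      · intro hall
        refine le_antisymm ?_ (furstDist_nonneg W x)
        by_contra hpos
        push_neg at hpos
        obtain ⟨k, hk⟩ := exists_nat_one_div_lt hpos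
        exact absurd (hall k) (not_lt.2 (le_of_lt hk))
    have hcomplnull : μ ({x : Projectivization ℝ (Fin n → ℝ) | x.submodule ≤ W}ᶜ) = 0 := by
      rw [hSWiInter, Set.compl_iInter]
      refine measure_iUnion_null fun k => ?_
      have := prob_compl_eq_one_sub (μ := μ) (hUkmeas k)
      rw [hUk1 k] at this
      simpa using this
    have hfull : (1 : ENNReal)
        ≤ μ {x : Projectivization ℝ (Fin n → ℝ) | x.submodule ≤ W}
          + μ ({x : Projectivization ℝ (Fin n → ℝ) | x.submodule ≤ W}ᶜ) := by
      have := measure_union_le (μ := μ)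
        {x : Projectivization ℝ (Fin n → ℝ) | x.submodule ≤ W}
        {x : Projectivization ℝ (Fin n → ℝ) | x.submodule ≤ W}ᶜ
      rw [Set.union_compl_self, measure_univ] at this
      exact this
    rw [hnull W hWbot hWtop, hcomplnull] at hfull
    simp at hfull

end MainProof
end FurstenbergAux
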